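/- arXiv:2209.14476 — 4 statements merged into one kernel-verified Lean document; each statement's English description precedes it below -/
import Mathlib

section
/- Let G_n be the straight linear 2-tree on n ≥ 5 vertices. Then gp(G_n) = 3. -/
open SimpleGraph

/-- A general position set: no vertex of `S` lies on a geodesic between two
other vertices of `S`. -/
def IsGPSet {V : Type*} (G : SimpleGraph V) (S : Set V) : Prop :=
  ∀ ⦃u v w : V⦄, u ∈ S → v ∈ S → w ∈ S → u ≠ v → v ≠ w → u ≠ w →
    G.dist u w ≠ G.dist u v + G.dist v w

/-- The general position number of a graph. -/
noncomputable def gpNumber {V : Type*} (G : SimpleGraph V) : ℕ :=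
  sSup {k | ∃ S : Set V, IsGPSet G S ∧ S.ncard = k}

/-- Degree of a vertex (as the cardinality of its neighborhood). -/
noncomputable def degSet {V : Type*} (G : SimpleGraph V) (v : V) : ℕ :=
  (G.neighborSet v).ncard

/-- Maximum degree of a graph on `Fin n`. -/
noncomputable def maxDeg {n : ℕ} (G : SimpleGraph (Fin n)) : ℕ :=
  Finset.univ.sup (fun v => degSet G v)

/-- `x` lies strictly (clockwise) between `a` and `b` on the cycle `Fin n`. -/
def StrictBtw {n : ℕ} (a x b : Fin n) : Prop :=
  0 < (x - a).val ∧ (x - a).val < (b - a).val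

/-- Chords `ab` and `cd` of the cycle `Fin n` cross each other. -/
def Crossing {n : ℕ} (a b c d : Fin n) : Prop :=
  StrictBtw a c b ∧ StrictBtw b d a

/-- `G` is a maximal outerplanar (outerplane) graph, presented with its unique
Hamiltonian cycle `0, 1, …, n-1`: all chords are pairwise non-crossing, and no
further non-crossing chord can be added (a triangulation of an `n`-gon). -/
def IsMOPFin (n : ℕ) [NeZero n] (G : SimpleGraph (Fin n)) : Prop :=
  3 ≤ n ∧
  (∀ i : Fin n, G.Adj i (i + 1)) ∧
  (∀ a b c d : Fin n, G.Adj a b → G.Adj c d → ¬ Crossing a b c d) ∧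
  (∀ a b : Fin n, a ≠ b → ¬ G.Adj a b → ∃ c d : Fin n, G.Adj c d ∧ Crossing a b c d)

/-- The internal triangles of a maximal outerplane graph on `Fin n`:
triangles none of whose edges lies on the Hamiltonian cycle. -/
def InternalTriangles (n : ℕ) [NeZero n] (G : SimpleGraph (Fin n)) : Set (Finset (Fin n)) :=
  {T | T.card = 3 ∧ (∀ a ∈ T, ∀ b ∈ T, a ≠ b → G.Adj a b) ∧
    ∀ a ∈ T, ∀ b ∈ T, b ≠ a + 1}

/-- The fan graph `F_m = K₁ ⊕ P_m`: the join of the central vertex `none`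
with a path on `m` vertices. -/
def fanGraph (m : ℕ) : SimpleGraph (Option (Fin m)) where
  Adj x y :=
    match x, y with
    | none, none => False
    | none, some _ => True
    | some _, none => True
    | some i, some j => i.val + 1 = j.val ∨ j.val + 1 = i.val
  symm := by
    constructor
    intro x y h
    cases x <;> cases y <;> simp_all <;> omega
  loopless := by
    constructor
    intro x h
    cases x <;> simp_all

/-- The straight linear 2-tree: `vᵢ ~ vⱼ` iff `0 < |i - j| ≤ 2`. -/
def linear2Tree (n : ℕ) : SimpleGraph (Fin n) where
  Adj i j := i ≠ j ∧ i.val ≤ j.val + 2 ∧ j.val ≤ i.val + 2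
  symm := by
    constructor
    intro i j h
    exact ⟨h.1.symm, h.2.2, h.2.1⟩
  loopless := by
    constructor
    intro i h
    exact h.1 rfl

/-- The generalized sunflower graph built from a base graph `G0` on the cycle
`h_0 … h_{m-1}` by attaching `x` new vertices `v_0, …, v_{x-1}`,
where `v_i` is joined to `h_i` and `h_{(i+1) mod m}`. -/
def GSF (m x : ℕ) (G0 : SimpleGraph (Fin m)) : SimpleGraph (Fin m ⊕ Fin x) where
  Adj a b :=
    match a, b with
    | .inl u, .inl v => G0.Adj u v
    | .inl u, .inr i => u.val = i.val ∨ u.val = (i.val + 1) % m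
    | .inr i, .inl u => u.val = i.val ∨ u.val = (i.val + 1) % m
    | .inr _, .inr _ => False
  symm := by
    constructor
    intro a b h
    cases a <;> cases b <;> simp_all [SimpleGraph.adj_comm]
  loopless := by
    constructor
    intro a h
    cases a <;> simp_all

/-- `G` contains `K₄` as a minor: there exist four nonempty, pairwise disjoint,
connected branch sets that are pairwise joined by an edge. -/
def HasK4Minor {V : Type*} (G : SimpleGraph V) : Prop :=
  ∃ B : Fin 4 → Set V,
    (∀ i, (B i).Nonempty) ∧
    (∀ i, (G.induce (B i)).Connected) ∧
    (∀ i j, i ≠ j → Disjoint (B i) (B j)) ∧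
    (∀ i j, i ≠ j → ∃ a ∈ B i, ∃ b ∈ B j, G.Adj a b)

lemma l2t_walk_exists (n : ℕ) : ∀ k (i j : Fin n), Nat.dist i.val j.val = k →
    ∃ p : (linear2Tree n).Walk i j, p.length ≤ (k + 1) / 2 := by
  intro k
  induction k using Nat.strong_induction_on with
  | _ k ih =>
    intro i j hk
    rcases Nat.lt_or_ge k 1 with h | h
    · have : i = j := by
        apply Fin.ext
        simp only [Nat.dist] at hk
        omega
      subst this
      exact ⟨SimpleGraph.Walk.nil, by simp⟩
    rcases Nat.lt_or_ge k 3 with h3 | h3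
    · have hadj : (linear2Tree n).Adj i j := by
        refine ⟨fun he => ?_, ?_, ?_⟩ <;> simp only [Nat.dist] at hk
        · subst he; omega
        · omega
        · omega
      refine ⟨hadj.toWalk, ?_⟩
      simp only [SimpleGraph.Adj.toWalk, SimpleGraph.Walk.length_cons,
        SimpleGraph.Walk.length_nil]
      omega
    · rcases Nat.lt_or_ge i.val j.val with hij | hij
      · have hlt : i.val + 2 < n := by
          have := j.isLt
          simp only [Nat.dist] at hk
          omega
        set i' : Fin n := ⟨i.val + 2, hlt⟩ with hi'
        have hv : i'.val = i.val + 2 := rfl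
        have hadj : (linear2Tree n).Adj i i' := by
          refine ⟨fun he => ?_, by omega, by omega⟩
          have := congrArg Fin.val he
          omega
        have hdist : Nat.dist i'.val j.val = k - 2 := by
          simp only [Nat.dist] at hk ⊢
          omega
        obtain ⟨p, hp⟩ := ih (k - 2) (by omega) i' j hdist
        refine ⟨SimpleGraph.Walk.cons hadj p, ?_⟩
        simp only [SimpleGraph.Walk.length_cons]
        omega
      · have hge : 2 ≤ i.val := by
          simp only [Nat.dist] at hk
          omega
        set i' : Fin n := ⟨i.val - 2, by omega⟩ with hi'
        have hv : i'.val = i.val - 2 := rfl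
        have hadj : (linear2Tree n).Adj i i' := by
          refine ⟨fun he => ?_, by omega, by omega⟩
          have := congrArg Fin.val he
          omega
        have hdist : Nat.dist i'.val j.val = k - 2 := by
          simp only [Nat.dist] at hk ⊢
          omega
        obtain ⟨p, hp⟩ := ih (k - 2) (by omega) i' j hdist
        refine ⟨SimpleGraph.Walk.cons hadj p, ?_⟩
        simp only [SimpleGraph.Walk.length_cons]
        omega

lemma l2t_walk_lower {n : ℕ} {i j : Fin n} (p : (linear2Tree n).Walk i j) :
    Nat.dist i.val j.val ≤ 2 * p.length := by
  induction p with
  | nil => simp [Nat.dist]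
  | @cons a b c h p ih =>
    have h1 : a.val ≤ b.val + 2 := h.2.1
    have h2 : b.val ≤ a.val + 2 := h.2.2
    simp only [SimpleGraph.Walk.length_cons]
    simp only [Nat.dist] at ih ⊢
    omega

lemma l2t_dist (n : ℕ) (i j : Fin n) :
    (linear2Tree n).dist i j = (Nat.dist i.val j.val + 1) / 2 := by
  obtain ⟨p, hp⟩ := l2t_walk_exists n (Nat.dist i.val j.val) i j rfl
  apply le_antisymm
  · exact le_trans (SimpleGraph.dist_le p) hp
  · rcases eq_or_ne i j with rfl | hne
    · simp [Nat.dist, SimpleGraph.dist_self]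
    · have hr : (linear2Tree n).Reachable i j := ⟨p⟩
      obtain ⟨q, hq⟩ := hr.exists_walk_length_eq_dist
      have := l2t_walk_lower q
      omega

set_option maxHeartbeats 1000000 in
/-- The straight linear 2-tree on `n ≥ 5` vertices has general
position number 3. -/
theorem stmt_11 (n : ℕ) (hn : 5 ≤ n) :
    gpNumber (linear2Tree n) = 3 := by
  have hd := l2t_dist n
  have hmem : 3 ∈ {k | ∃ S : Set (Fin n), IsGPSet (linear2Tree n) S ∧ S.ncard = 3} := by
    refine ⟨{⟨0, by omega⟩, ⟨1, by omega⟩, ⟨2, by omega⟩}, ?_, ?_⟩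
    · intro u v w hu hv hw huv hvw huw
      rw [hd, hd, hd]
      have hval : ∀ x : Fin n,
          x ∈ ({⟨0, by omega⟩, ⟨1, by omega⟩, ⟨2, by omega⟩} : Set (Fin n)) → x.val < 3 := by
        rintro x (rfl | rfl | rfl) <;> simp
      have h1 := hval u hu
      have h2 := hval v hv
      have h3 := hval w hw
      have e1 : u.val ≠ v.val := fun h => huv (Fin.ext h)
      have e2 : v.val ≠ w.val := fun h => hvw (Fin.ext h)
      have e3 : u.val ≠ w.val := fun h => huw (Fin.ext h)
      simp only [Nat.dist]
      omega
    · rw [Set.ncard_eq_three]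
      refine ⟨_, _, _, ?_, ?_, ?_, rfl⟩ <;>
        (intro h; have := congrArg Fin.val h; simp at this)
  have hub : ∀ k ∈ {k | ∃ S : Set (Fin n), IsGPSet (linear2Tree n) S ∧ S.ncard = k},
      k ≤ 3 := by
    rintro k ⟨S, hS, rfl⟩
    by_contra hk
    push_neg at hk
    have hfin : S.Finite := Set.toFinite S
    obtain ⟨a, ha⟩ : S.Nonempty := by
      rw [← Set.ncard_pos hfin]; omega
    have h1 : (S \ {a}).ncard + 1 = S.ncard := Set.ncard_diff_singleton_add_one ha hfin
    obtain ⟨b, hb⟩ : (S \ {a}).Nonempty := by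
      rw [← Set.ncard_pos (hfin.diff)]; omega
    have h2 : ((S \ {a}) \ {b}).ncard + 1 = (S \ {a}).ncard :=
      Set.ncard_diff_singleton_add_one hb (hfin.diff)
    obtain ⟨c, hc⟩ : ((S \ {a}) \ {b}).Nonempty := by
      rw [← Set.ncard_pos ((hfin.diff).diff)]; omega
    have h3 : (((S \ {a}) \ {b}) \ {c}).ncard + 1 = ((S \ {a}) \ {b}).ncard :=
      Set.ncard_diff_singleton_add_one hc ((hfin.diff).diff)
    obtain ⟨d, hdS⟩ : (((S \ {a}) \ {b}) \ {c}).Nonempty := by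
      rw [← Set.ncard_pos (((hfin.diff).diff).diff)]; omega
    obtain ⟨⟨⟨hdS', hdc'⟩, hdb'⟩, hdc''⟩ := hdS
    obtain ⟨⟨hcS, hca⟩, hcb⟩ := hc
    obtain ⟨hbS, hba⟩ := hb
    simp only [Set.mem_singleton_iff] at hba hca hcb hdc' hdb' hdc''
    have hab : a ≠ b := fun h => hba h.symm
    have hac : a ≠ c := fun h => hca h.symm
    have hbc : b ≠ c := fun h => hcb h.symm
    have had : a ≠ d := fun h => hdc' h.symm
    have hbd : b ≠ d := fun h => hdb' h.symm
    have hcd : c ≠ d := fun h => hdc'' h.symm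
    have key3 : ∀ x y z : Fin n, x ∈ S → y ∈ S → z ∈ S → x.val < y.val → y.val < z.val →
        (y.val - x.val) % 2 = 1 ∧ (z.val - y.val) % 2 = 1 := by
      intro x y z hx hy hz hxy hyz
      have hxy' : x ≠ y := fun h => by rw [h] at hxy; omega
      have hyz' : y ≠ z := fun h => by rw [h] at hyz; omega
      have hxz' : x ≠ z := fun h => by rw [h] at hxy; omega
      have hne := hS hx hy hz hxy' hyz' hxz'
      rw [hd, hd, hd, Nat.dist_eq_sub_of_le (le_of_lt hxy),
        Nat.dist_eq_sub_of_le (le_of_lt hyz),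
        Nat.dist_eq_sub_of_le (le_of_lt (hxy.trans hyz))] at hne
      omega
    classical
    set T : Finset (Fin n) := {a, b, c, d} with hT
    have hTS : ∀ x ∈ T, x ∈ S := by
      intro x hx
      rw [hT] at hx
      simp only [Finset.mem_insert, Finset.mem_singleton] at hx
      rcases hx with rfl | rfl | rfl | rfl
      exacts [ha, hbS, hcS, hdS']
    have hTcard : T.card = 4 := by
      rw [hT]
      rw [Finset.card_insert_of_notMem (by simp [hab, hac, had]),
        Finset.card_insert_of_notMem (by simp [hbc, hbd]),
        Finset.card_insert_of_notMem (by simp [hcd]), Finset.card_singleton]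
    obtain ⟨p, q, r, s, hp, hq, hr, hs', hlt1, hlt2, hlt3⟩ :
        ∃ p q r s : Fin n, p ∈ S ∧ q ∈ S ∧ r ∈ S ∧ s ∈ S ∧
          p.val < q.val ∧ q.val < r.val ∧ r.val < s.val := by
      have hsort := (Finset.sortedLT_sort T).pairwise
      have hlen : (Finset.sort T).length = 4 := by
        rw [Finset.length_sort, hTcard]
      have hmemT : ∀ x ∈ Finset.sort T, x ∈ S := fun x hx =>
        hTS x ((Finset.mem_sort _).1 hx)
      rcases hl : Finset.sort T with _ | ⟨p, _ | ⟨q, _ | ⟨r, _ | ⟨s, t⟩⟩⟩⟩ <;>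
          rw [hl] at hsort hlen hmemT
      · simp at hlen
      · simp at hlen
      · simp at hlen
      · simp at hlen
      · simp only [List.pairwise_cons] at hsort
        refine ⟨p, q, r, s, hmemT p (by simp), hmemT q (by simp), hmemT r (by simp),
          hmemT s (by simp), ?_, ?_, ?_⟩
        · exact Fin.lt_iff_val_lt_val.mp (hsort.1 q (by simp))
        · exact Fin.lt_iff_val_lt_val.mp (hsort.2.1 r (by simp))
        · exact Fin.lt_iff_val_lt_val.mp (hsort.2.2.1 s (by simp))
    obtain ⟨g1, g2⟩ := key3 p q r hp hq hr hlt1 hlt2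
    obtain ⟨g3, g4⟩ := key3 p r s hp hr hs' (hlt1.trans hlt2) hlt3
    omega
  apply le_antisymm
  · exact csSup_le ⟨3, hmem⟩ hub
  · exact le_csSup ⟨3, hub⟩ hmem
end

section
/- Let G be a maximal outerplanar graph of order n with k ≥ 1 internal triangles. Then k ≤ ⌊n/2⌋ − 2. -/
open SimpleGraph

set_option linter.unusedSectionVars false
set_option linter.unusedVariables false

section Helpers
variable {n : ℕ} [NeZero n]

/-- closed arc membership -/
def InArc (u v y : Fin n) : Prop := (y - u).val ≤ (v - u).val

lemma finSubVal (x a : Fin n) :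
    (x - a).val = if a.val ≤ x.val then x.val - a.val else x.val + n - a.val := by
  have hx := x.isLt
  have ha := a.isLt
  rw [Fin.sub_def]
  simp only [Fin.val_mk]
  split_ifs with h
  · rw [Nat.mod_eq_sub_mod (by omega), Nat.mod_eq_of_lt (by omega)]
    omega
  · rw [Nat.mod_eq_of_lt (by omega)]
    omega

lemma mop_sbtw_ne {u x v : Fin n} (h : StrictBtw u x v) : u ≠ v ∧ x ≠ u ∧ x ≠ v := by
  have h0 : 0 < n := Nat.pos_of_ne_zero (NeZero.ne n)
  have := u.isLt; have := x.isLt; have := v.isLt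
  simp only [StrictBtw, ne_eq, Fin.ext_iff, finSubVal] at *
  split_ifs at * <;> omega

lemma mop_sub_val_inj {a x b : Fin n} (h : (x - a).val = (b - a).val) : x = b := by
  have h0 : 0 < n := Nat.pos_of_ne_zero (NeZero.ne n)
  have := a.isLt; have := x.isLt; have := b.isLt
  simp only [StrictBtw, ne_eq, Fin.ext_iff, finSubVal] at *
  split_ifs at * <;> omega

lemma mop_sub_val_pos {x a : Fin n} (h : x ≠ a) : 0 < (x - a).val := by
  have h0 : 0 < n := Nat.pos_of_ne_zero (NeZero.ne n)
  have := a.isLt; have := x.isLt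
  simp only [StrictBtw, ne_eq, Fin.ext_iff, finSubVal] at *
  split_ifs at * <;> omega

lemma mop_sub_self_val (a : Fin n) : (a - a).val = 0 := by
  simp only [finSubVal]; split_ifs <;> omega

lemma mop_not_inarc {u v y : Fin n} (h : StrictBtw v y u) : ¬ InArc u v y := by
  have h0 : 0 < n := Nat.pos_of_ne_zero (NeZero.ne n)
  have := u.isLt; have := v.isLt; have := y.isLt
  simp only [StrictBtw, InArc, ne_eq, Fin.ext_iff, finSubVal] at *
  split_ifs at * <;> omega

lemma mop_cover (u v y : Fin n) (huv : u ≠ v) : InArc u v y ∨ StrictBtw v y u := by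
  have h0 : 0 < n := Nat.pos_of_ne_zero (NeZero.ne n)
  have := u.isLt; have := v.isLt; have := y.isLt
  simp only [StrictBtw, InArc, ne_eq, Fin.ext_iff, finSubVal] at *
  split_ifs at * <;> omega

lemma mop_inarc_of_sbtw {u v y : Fin n} (h : StrictBtw u y v) : InArc u v y := h.2.le

lemma mop_arc_self (u v : Fin n) : InArc u v u := by
  simp only [InArc, mop_sub_self_val]; omega

lemma mop_arc_self' (u v : Fin n) : InArc u v v := le_refl _

lemma mop_both_arc {u v y : Fin n} (h1 : InArc u v y) (h2 : InArc v u y) :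
    y = u ∨ y = v := by
  have h0 : 0 < n := Nat.pos_of_ne_zero (NeZero.ne n)
  have := u.isLt; have := v.isLt; have := y.isLt
  simp only [StrictBtw, InArc, ne_eq, Fin.ext_iff, finSubVal] at *
  split_ifs at * <;> omega

lemma mop_inarc_trans {u v p q y : Fin n} (hp : InArc u v p) (hq : InArc u v q)
    (hlt : (p - u).val < (q - u).val) (h : StrictBtw p y q) : InArc u v y := by
  have h0 : 0 < n := Nat.pos_of_ne_zero (NeZero.ne n)
  have := u.isLt; have := v.isLt; have := p.isLt; have := q.isLt; have := y.isLt
  simp only [StrictBtw, InArc, ne_eq, Fin.ext_iff, finSubVal] at *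
  split_ifs at * <;> omega

lemma mop_sbtw_v {u v p q : Fin n} (hp : InArc u v p) (hq : InArc u v q)
    (hgt : (q - u).val < (p - u).val) (hpv : p ≠ v) : StrictBtw p v q := by
  have h0 : 0 < n := Nat.pos_of_ne_zero (NeZero.ne n)
  have := u.isLt; have := v.isLt; have := p.isLt; have := q.isLt
  simp only [StrictBtw, InArc, ne_eq, Fin.ext_iff, finSubVal] at *
  split_ifs at * <;> omega

lemma mop_sbtw_u {u v p q : Fin n} (hp : InArc u v p) (hq : InArc u v q)
    (hgt : (q - u).val < (p - u).val) (hqu : q ≠ u) : StrictBtw p u q := by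
  have h0 : 0 < n := Nat.pos_of_ne_zero (NeZero.ne n)
  have := u.isLt; have := v.isLt; have := p.isLt; have := q.isLt
  simp only [StrictBtw, InArc, ne_eq, Fin.ext_iff, finSubVal] at *
  split_ifs at * <;> omega

lemma mop_sbtw_of_arc {u v z : Fin n} (h : InArc u v z) (h1 : z ≠ u) (h2 : z ≠ v) :
    StrictBtw u z v := by
  have h0 : 0 < n := Nat.pos_of_ne_zero (NeZero.ne n)
  have := u.isLt; have := v.isLt; have := z.isLt
  simp only [StrictBtw, InArc, ne_eq, Fin.ext_iff, finSubVal] at *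
  split_ifs at * <;> omega

lemma mop_rot1 {a b c : Fin n} (h1 : 0 < (b - a).val) (h2 : (b - a).val < (c - a).val) :
    StrictBtw b c a := by
  have h0 : 0 < n := Nat.pos_of_ne_zero (NeZero.ne n)
  have := a.isLt; have := b.isLt; have := c.isLt
  simp only [StrictBtw, ne_eq, Fin.ext_iff, finSubVal] at *
  split_ifs at * <;> omega

lemma mop_rot2 {a b c x : Fin n} (h2 : (b - a).val < (x - a).val)
    (h3 : (x - a).val < (c - a).val) : StrictBtw b x c := by
  have h0 : 0 < n := Nat.pos_of_ne_zero (NeZero.ne n)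
  have := a.isLt; have := b.isLt; have := c.isLt; have := x.isLt
  simp only [StrictBtw, ne_eq, Fin.ext_iff, finSubVal] at *
  split_ifs at * <;> omega

lemma mop_rot3 {a b c : Fin n} (h1 : 0 < (b - a).val) (h2 : (b - a).val < (c - a).val) :
    StrictBtw c a b := by
  have h0 : 0 < n := Nat.pos_of_ne_zero (NeZero.ne n)
  have := a.isLt; have := b.isLt; have := c.isLt
  simp only [StrictBtw, ne_eq, Fin.ext_iff, finSubVal] at *
  split_ifs at * <;> omega

lemma mop_rot4 {a c x : Fin n} (h0' : 0 < (c - a).val) (h : (c - a).val < (x - a).val) :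
    StrictBtw c x a := by
  have h0 : 0 < n := Nat.pos_of_ne_zero (NeZero.ne n)
  have := a.isLt; have := c.isLt; have := x.isLt
  simp only [StrictBtw, ne_eq, Fin.ext_iff, finSubVal] at *
  split_ifs at * <;> omega

lemma mop_base2 {a b c y : Fin n} (h2 : (b - a).val < (c - a).val) (h : StrictBtw b y c) :
    (b - a).val < (y - a).val ∧ (y - a).val ≤ (c - a).val := by
  have h0 : 0 < n := Nat.pos_of_ne_zero (NeZero.ne n)
  have := a.isLt; have := b.isLt; have := c.isLt; have := y.isLt
  simp only [StrictBtw, ne_eq, Fin.ext_iff, finSubVal] at *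
  split_ifs at * <;> omega

lemma mop_base3 {a c y : Fin n} (h0' : 0 < (c - a).val) (h : StrictBtw c y a) :
    (c - a).val < (y - a).val := by
  have h0 : 0 < n := Nat.pos_of_ne_zero (NeZero.ne n)
  have := a.isLt; have := c.isLt; have := y.isLt
  simp only [StrictBtw, ne_eq, Fin.ext_iff, finSubVal] at *
  split_ifs at * <;> omega

lemma mop_succ (hn : 3 ≤ n) {p q : Fin n} (hpq : p ≠ q)
    (hno : ¬ StrictBtw p (p + 1) q) : q = p + 1 := by
  have h1 : ((p + 1) - p : Fin n) = 1 := by abel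
  have hv1 : ((1 : Fin n)).val = 1 := by
    have h : ((1 : Fin n)).val = 1 % n := Fin.val_one' n
    rw [Nat.mod_eq_of_lt (by omega)] at h
    exact h
  have hqp : (q - p).val ≠ 0 := by
    intro h
    exact hpq (mop_sub_val_inj (by rw [h, mop_sub_self_val])).symm
  simp only [StrictBtw, h1, hv1] at hno
  have h2 : ¬ (1 < (q - p).val) := fun hh => hno ⟨by omega, hh⟩
  have : (q - p).val = 1 := by omega
  have : q - p = 1 := Fin.ext (by rw [this, hv1])
  have := eq_add_of_sub_eq this
  rw [add_comm] at this
  exact this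

end Helpers

section Key
variable {n : ℕ} [NeZero n]

open Finset in
/-- The invariant carried through the induction. -/
def MopGood (S : Finset (Finset (Fin n))) (R : Finset (Fin n))
    (F : Finset (Fin n × Fin n)) : Prop :=
  (∀ T ∈ S, T.card = 3) ∧
  (∀ T ∈ S, ∀ p ∈ T, p ∈ R) ∧
  (∀ T ∈ S, ∀ p ∈ T, ∀ q ∈ T, q = p + 1 → (p, q) ∈ F ∨ (q, p) ∈ F) ∧
  (∀ T ∈ S, ∀ T' ∈ S, ∀ p ∈ T, ∀ q ∈ T, ∀ p' ∈ T', ∀ q' ∈ T',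
      p ≠ q → p' ≠ q' → ¬ Crossing p q p' q') ∧
  (∀ e ∈ F, e.1 ∈ R ∧ e.2 ∈ R ∧ e.1 ≠ e.2 ∧ ∀ y ∈ R, ¬ StrictBtw e.1 y e.2) ∧
  (∀ p ∈ R, ∀ q ∈ R, p ≠ q → (∀ y ∈ R, ¬ StrictBtw p y q) →
      q = p + 1 ∨ (p, q) ∈ F ∨ (q, p) ∈ F)

open scoped Classical in
open Finset in
lemma mop_side (S : Finset (Finset (Fin n))) (R : Finset (Fin n))
    (F : Finset (Fin n × Fin n)) (hG : MopGood S R F)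
    (T T' : Finset (Fin n)) (hTS : T ∈ S) (hT'S : T' ∈ S)
    (u v x : Fin n) (huT : u ∈ T) (hvT : v ∈ T) (hxT' : x ∈ T')
    (hx : StrictBtw u x v) :
    MopGood (S.filter fun t => ∀ y ∈ t, InArc u v y)
      (R.filter fun y => InArc u v y)
      (insert (v, u) (F.filter fun e => InArc u v e.1 ∧ InArc u v e.2)) ∧
    T' ∈ S.filter fun t => ∀ y ∈ t, InArc u v y := by
  obtain ⟨hT3, hTR, hTF, hX, hFp, hRp⟩ := hG
  obtain ⟨huv, hxu, hxv⟩ := mop_sbtw_ne hx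
  have huR : u ∈ R := hTR T hTS u huT
  have hvR : v ∈ R := hTR T hTS v hvT
  have hxR : x ∈ R := hTR T' hT'S x hxT'
  have hxArc : InArc u v x := mop_inarc_of_sbtw hx
  -- T' is entirely inside the closed arc
  have hT'in : ∀ y ∈ T', InArc u v y := by
    intro y hy
    rcases mop_cover u v y huv with h | h
    · exact h
    · exfalso
      have hyx : x ≠ y := by
        intro he; exact (mop_not_inarc h) (he ▸ hxArc)
      exact hX T hTS T' hT'S u huT v hvT x hxT' y hy huv hyx ⟨hx, h⟩
  refine ⟨⟨?_, ?_, ?_, ?_, ?_, ?_⟩, mem_filter.mpr ⟨hT'S, hT'in⟩⟩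
  · intro t ht
    exact hT3 t (mem_filter.mp ht).1
  · intro t ht p hp
    exact mem_filter.mpr ⟨hTR t (mem_filter.mp ht).1 p hp,
      (mem_filter.mp ht).2 p hp⟩
  · intro t ht p hp q hq hpq
    rcases hTF t (mem_filter.mp ht).1 p hp q hq hpq with h | h
    · exact Or.inl (mem_insert_of_mem (mem_filter.mpr
        ⟨h, (mem_filter.mp ht).2 p hp, (mem_filter.mp ht).2 q hq⟩))
    · exact Or.inr (mem_insert_of_mem (mem_filter.mpr
        ⟨h, (mem_filter.mp ht).2 q hq, (mem_filter.mp ht).2 p hp⟩))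
  · intro t ht t' ht' p hp q hq p' hp' q' hq'
    exact hX t (mem_filter.mp ht).1 t' (mem_filter.mp ht').1 p hp q hq p' hp' q' hq'
  · intro e he
    rcases mem_insert.mp he with rfl | he'
    · refine ⟨mem_filter.mpr ⟨hvR, mop_arc_self' u v⟩,
        mem_filter.mpr ⟨huR, mop_arc_self u v⟩, huv.symm, ?_⟩
      intro y hy hs
      exact (mop_not_inarc hs) (mem_filter.mp hy).2
    · obtain ⟨heF, h1, h2⟩ := mem_filter.mp he'
      obtain ⟨e1R, e2R, e12, hemp⟩ := hFp e heF
      exact ⟨mem_filter.mpr ⟨e1R, h1⟩, mem_filter.mpr ⟨e2R, h2⟩, e12,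
        fun y hy => hemp y (mem_filter.mp hy).1⟩
  · intro p hp q hq hpq hno
    obtain ⟨hpR, hpA⟩ := mem_filter.mp hp
    obtain ⟨hqR, hqA⟩ := mem_filter.mp hq
    rcases lt_trichotomy ((p - u).val) ((q - u).val) with hlt | heq | hgt
    · have hall : ∀ y ∈ R, ¬ StrictBtw p y q := fun y hy hs =>
        hno y (mem_filter.mpr ⟨hy, mop_inarc_trans hpA hqA hlt hs⟩) hs
      rcases hRp p hpR q hqR hpq hall with h | h | h
      · exact Or.inl h
      · exact Or.inr (Or.inl (mem_insert_of_mem (mem_filter.mpr ⟨h, hpA, hqA⟩)))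
      · exact Or.inr (Or.inr (mem_insert_of_mem (mem_filter.mpr ⟨h, hqA, hpA⟩)))
    · exact absurd (mop_sub_val_inj heq) hpq
    · have hpv : p = v := by
        by_contra hne
        exact hno v (mem_filter.mpr ⟨hvR, mop_arc_self' u v⟩)
          (mop_sbtw_v hpA hqA hgt hne)
      have hqu : q = u := by
        by_contra hne
        exact hno u (mem_filter.mpr ⟨huR, mop_arc_self u v⟩)
          (mop_sbtw_u hpA hqA hgt hne)
      subst hpv; subst hqu
      exact Or.inr (Or.inl (mem_insert_self _ _))

end Key

section Key2
variable {n : ℕ} [NeZero n]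

open scoped Classical in
open Finset in
lemma mop_split (S : Finset (Finset (Fin n))) (R : Finset (Fin n))
    (F : Finset (Fin n × Fin n)) (hG : MopGood S R F)
    (ih : ∀ S' ⊂ S, ∀ (R' : Finset (Fin n)) (F' : Finset (Fin n × Fin n)),
      MopGood S' R' F' → S'.Nonempty → 2 * S'.card + 4 ≤ R'.card + F'.card)
    (T T' : Finset (Fin n)) (hTS : T ∈ S) (hT'S : T' ∈ S)
    (u v w x : Fin n) (huT : u ∈ T) (hvT : v ∈ T) (hwT : w ∈ T) (hxT' : x ∈ T')
    (hx : StrictBtw u x v) (hw : StrictBtw v w u) :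
    2 * S.card + 4 ≤ R.card + F.card := by
  obtain ⟨hT3, hTR, hTF, hX, hFp, hRp⟩ := hG
  obtain ⟨huv, hxu, hxv⟩ := mop_sbtw_ne hx
  obtain ⟨hvu, hwv, hwu⟩ := mop_sbtw_ne hw
  have huR : u ∈ R := hTR T hTS u huT
  have hvR : v ∈ R := hTR T hTS v hvT
  have hxR : x ∈ R := hTR T' hT'S x hxT'
  have hwR : w ∈ R := hTR T hTS w hwT
  have h1 := mop_side S R F ⟨hT3, hTR, hTF, hX, hFp, hRp⟩ T T' hTS hT'S u v x huT hvT hxT' hx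
  have h2 := mop_side S R F ⟨hT3, hTR, hTF, hX, hFp, hRp⟩ T T hTS hTS v u w hvT huT hwT hw
  set S1 := S.filter (fun t => ∀ y ∈ t, InArc u v y) with hS1def
  set S2 := S.filter (fun t => ∀ y ∈ t, InArc v u y) with hS2def
  set R1 := R.filter (fun y => InArc u v y) with hR1def
  set R2 := R.filter (fun y => InArc v u y) with hR2def
  set F1 := insert (v, u) (F.filter fun e => InArc u v e.1 ∧ InArc u v e.2) with hF1def
  set F2 := insert (u, v) (F.filter fun e => InArc v u e.1 ∧ InArc v u e.2) with hF2def
  have hT'S1 : T' ∈ S1 := h1.2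
  have hTS2 : T ∈ S2 := h2.2
  have hTnotS1 : T ∉ S1 := by
    intro h; exact (mop_not_inarc hw) ((mem_filter.mp h).2 w hwT)
  have hT'notS2 : T' ∉ S2 := by
    intro h; exact (mop_not_inarc hx) ((mem_filter.mp h).2 x hxT')
  have hsub1 : S1 ⊂ S :=
    (Finset.ssubset_iff_of_subset (filter_subset _ _)).mpr ⟨T, hTS, hTnotS1⟩
  have hsub2 : S2 ⊂ S :=
    (Finset.ssubset_iff_of_subset (filter_subset _ _)).mpr ⟨T', hT'S, hT'notS2⟩
  have k1 := ih S1 hsub1 R1 F1 h1.1 ⟨T', hT'S1⟩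
  have k2 := ih S2 hsub2 R2 F2 h2.1 ⟨T, hTS2⟩
  -- S1, S2 partition S
  have hcuv : ({u, v} : Finset (Fin n)).card ≤ 2 := by
    have := card_insert_le u ({v} : Finset (Fin n))
    simpa using this
  have hdisjS : Disjoint S1 S2 := by
    rw [Finset.disjoint_left]
    intro t ht1 ht2
    have hsub : t ⊆ {u, v} := by
      intro y hy
      rcases mop_both_arc ((mem_filter.mp ht1).2 y hy) ((mem_filter.mp ht2).2 y hy) with
        rfl | rfl <;> simp
    have := card_le_card hsub
    rw [hT3 t (mem_filter.mp ht1).1] at this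
    omega
  have hunionS : S1 ∪ S2 = S := by
    ext t
    constructor
    · intro ht
      rcases mem_union.mp ht with h | h
      · exact (mem_filter.mp h).1
      · exact (mem_filter.mp h).1
    · intro ht
      have hnsub : ¬ t ⊆ ({u, v} : Finset (Fin n)) := by
        intro hsub
        have := card_le_card hsub
        rw [hT3 t ht] at this
        omega
      obtain ⟨z, hzt, hznm⟩ := Finset.not_subset.mp hnsub
      simp only [mem_insert, mem_singleton, not_or] at hznm
      obtain ⟨hzu, hzv⟩ := hznm
      rcases mop_cover u v z huv with hz | hz
      · have hzs : StrictBtw u z v := mop_sbtw_of_arc hz hzu hzv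
        apply mem_union_left
        refine mem_filter.mpr ⟨ht, ?_⟩
        intro y hy
        rcases mop_cover u v y huv with h | h
        · exact h
        · exfalso
          have hzy : z ≠ y := by
            intro he; exact (mop_not_inarc h) (he ▸ (mop_inarc_of_sbtw hzs))
          exact hX T hTS t ht u huT v hvT z hzt y hy huv hzy ⟨hzs, h⟩
      · apply mem_union_right
        refine mem_filter.mpr ⟨ht, ?_⟩
        intro y hy
        rcases mop_cover v u y hvu with h | h
        · exact h
        · exfalso
          have hyz : y ≠ z := by
            intro he; exact (mop_not_inarc hz) (he ▸ (mop_inarc_of_sbtw h)) |>.elim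
          exact hX T hTS t ht u huT v hvT y hy z hzt huv hyz ⟨h, hz⟩
  have hScards : S1.card + S2.card = S.card := by
    rw [← card_union_of_disjoint hdisjS, hunionS]
  -- R1, R2 cover R with intersection {u, v}
  have hunionR : R1 ∪ R2 = R := by
    ext y
    constructor
    · intro hy
      rcases mem_union.mp hy with h | h
      · exact (mem_filter.mp h).1
      · exact (mem_filter.mp h).1
    · intro hy
      rcases mop_cover u v y huv with h | h
      · exact mem_union_left _ (mem_filter.mpr ⟨hy, h⟩)
      · exact mem_union_right _ (mem_filter.mpr ⟨hy, mop_inarc_of_sbtw h⟩)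
  have hinterR : R1 ∩ R2 = {u, v} := by
    ext y
    constructor
    · intro hy
      obtain ⟨hy1, hy2⟩ := mem_inter.mp hy
      rcases mop_both_arc (mem_filter.mp hy1).2 (mem_filter.mp hy2).2 with rfl | rfl <;> simp
    · intro hy
      simp only [mem_insert, mem_singleton] at hy
      rcases hy with h | h
      · rw [h]
        exact mem_inter.mpr ⟨mem_filter.mpr ⟨huR, mop_arc_self u v⟩,
          mem_filter.mpr ⟨huR, mop_arc_self' v u⟩⟩
      · rw [h]
        exact mem_inter.mpr ⟨mem_filter.mpr ⟨hvR, mop_arc_self' u v⟩,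
          mem_filter.mpr ⟨hvR, mop_arc_self v u⟩⟩
  have hRcards : R1.card + R2.card = R.card + 2 := by
    have hci := Finset.card_union_add_card_inter R1 R2
    rw [hunionR, hinterR] at hci
    have h2 : ({u, v} : Finset (Fin n)).card = 2 := by
      rw [card_insert_of_notMem (by simpa using huv), card_singleton]
    omega
  -- F cards
  have hFcards : F1.card + F2.card ≤ F.card + 2 := by
    have hf1 : F1.card ≤ (F.filter fun e => InArc u v e.1 ∧ InArc u v e.2).card + 1 :=
      card_insert_le _ _
    have hf2 : F2.card ≤ (F.filter fun e => InArc v u e.1 ∧ InArc v u e.2).card + 1 :=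
      card_insert_le _ _
    have hdisjF : Disjoint (F.filter fun e => InArc u v e.1 ∧ InArc u v e.2)
        (F.filter fun e => InArc v u e.1 ∧ InArc v u e.2) := by
      rw [Finset.disjoint_left]
      intro e he1 he2
      obtain ⟨heF, ha1, ha2⟩ := mem_filter.mp he1
      obtain ⟨_, hb1, hb2⟩ := mem_filter.mp he2
      obtain ⟨e1R, e2R, e12, hemp⟩ := hFp e heF
      rcases mop_both_arc ha1 hb1 with h1 | h1 <;> rcases mop_both_arc ha2 hb2 with h2 | h2
      · exact e12 (h1.trans h2.symm)
      · exact hemp x hxR (h1 ▸ h2 ▸ hx)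
      · exact hemp w hwR (h1 ▸ h2 ▸ hw)
      · exact e12 (h1.trans h2.symm)
    have hsubF : (F.filter fun e => InArc u v e.1 ∧ InArc u v e.2) ∪
        (F.filter fun e => InArc v u e.1 ∧ InArc v u e.2) ⊆ F :=
      union_subset (filter_subset _ _) (filter_subset _ _)
    have := card_le_card hsubF
    rw [card_union_of_disjoint hdisjF] at this
    omega
  omega

end Key2

section Key3
variable {n : ℕ} [NeZero n]

open scoped Classical in
open Finset in
set_option maxHeartbeats 2000000 in
lemma mop_key (S : Finset (Finset (Fin n))) :
    ∀ (R : Finset (Fin n)) (F : Finset (Fin n × Fin n)),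
      MopGood S R F → S.Nonempty → 2 * S.card + 4 ≤ R.card + F.card := by
  induction S using Finset.strongInduction with
  | _ S ih =>
  intro R F hG hS
  obtain ⟨hT3, hTR, hTF, hX, hFp, hRp⟩ := hG
  obtain ⟨T, hTS⟩ := hS
  obtain ⟨a0, b0, c0, hab0, hac0, hbc0, hTe0⟩ := Finset.card_eq_three.mp (hT3 T hTS)
  have main : ∀ a b c : Fin n, a ≠ b → a ≠ c → b ≠ c → T = {a, b, c} →
      (b - a).val < (c - a).val → 2 * S.card + 4 ≤ R.card + F.card := by
    intro a b c hab hac hbc hTe hbc2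
    have haT : a ∈ T := by rw [hTe]; simp
    have hbT : b ∈ T := by rw [hTe]; simp
    have hcT : c ∈ T := by rw [hTe]; simp
    have haR : a ∈ R := hTR T hTS a haT
    have hbR : b ∈ R := hTR T hTS b hbT
    have hcR : c ∈ R := hTR T hTS c hcT
    have hβpos : 0 < (b - a).val := mop_sub_val_pos (Ne.symm hab)
    have hγpos : 0 < (c - a).val := mop_sub_val_pos (Ne.symm hac)
    by_cases hone : ∀ t ∈ S, t = T
    · -- base case: S = {T}
      have hSsing : S = {T} := Finset.eq_singleton_iff_unique_mem.mpr ⟨hTS, hone⟩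
      have hSc : S.card = 1 := by rw [hSsing]; exact card_singleton T
      rw [hSc]
      set G1 := R.filter (fun y => 0 < (y - a).val ∧ (y - a).val ≤ (b - a).val) with hG1d
      set G2 := R.filter (fun y => (b - a).val < (y - a).val ∧ (y - a).val ≤ (c - a).val)
        with hG2d
      set G3 := R.filter (fun y => ¬(0 < (y - a).val ∧ (y - a).val ≤ (b - a).val) ∧
        ¬((b - a).val < (y - a).val ∧ (y - a).val ≤ (c - a).val)) with hG3d
      have hsum : G1.card + G2.card + G3.card = R.card := by
        have e1 := Finset.card_filter_add_card_filter_not (s := R)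
          (p := fun y => 0 < (y - a).val ∧ (y - a).val ≤ (b - a).val)
        have e2 := Finset.card_filter_add_card_filter_not
          (s := R.filter (fun y => ¬(0 < (y - a).val ∧ (y - a).val ≤ (b - a).val)))
          (p := fun y => (b - a).val < (y - a).val ∧ (y - a).val ≤ (c - a).val)
        rw [filter_filter, filter_filter] at e2
        have e3 : (R.filter (fun y => (¬(0 < (y - a).val ∧ (y - a).val ≤ (b - a).val)) ∧
            ((b - a).val < (y - a).val ∧ (y - a).val ≤ (c - a).val))) = G2 := by
          rw [hG2d]
          apply Finset.filter_congr
          intro y _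
          constructor
          · rintro ⟨_, h⟩; exact h
          · intro h; exact ⟨by omega, h⟩
        rw [e3] at e2
        rw [hG1d, hG3d]
        omega
      have hbG1 : b ∈ G1 := mem_filter.mpr ⟨hbR, ⟨hβpos, le_refl _⟩⟩
      have hcG2 : c ∈ G2 := mem_filter.mpr ⟨hcR, ⟨hbc2, le_refl _⟩⟩
      have haG3 : a ∈ G3 := by
        have h00 : (a - a).val = 0 := mop_sub_self_val a
        exact mem_filter.mpr ⟨haR, ⟨by omega, by omega⟩⟩
      have pairT : ∀ p ∈ T, ∀ q ∈ T, q = p + 1 → (p, q) ∈ F ∨ (q, p) ∈ F := hTF T hTS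
      have alt1 : 2 ≤ G1.card ∨ ((a, b) ∈ F ∨ (b, a) ∈ F) := by
        by_cases h2 : 2 ≤ G1.card
        · exact Or.inl h2
        · right
          have h1 : G1.card = 1 := by
            have := card_pos.mpr ⟨b, hbG1⟩; omega
          obtain ⟨z, hz⟩ := card_eq_one.mp h1
          have hno : ∀ y ∈ R, ¬ StrictBtw a y b := by
            intro y hyR hy
            have hyG : y ∈ G1 := mem_filter.mpr ⟨hyR, ⟨hy.1, le_of_lt hy.2⟩⟩
            have hbz : b = z := by
              have := hbG1; rw [hz, mem_singleton] at this; exact this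
            rw [hz, mem_singleton, ← hbz] at hyG
            rw [hyG] at hy
            exact lt_irrefl _ hy.2
          rcases hRp a haR b hbR hab hno with h | h
          · exact pairT a haT b hbT h
          · exact h
      have alt2 : 2 ≤ G2.card ∨ ((b, c) ∈ F ∨ (c, b) ∈ F) := by
        by_cases h2 : 2 ≤ G2.card
        · exact Or.inl h2
        · right
          have h1 : G2.card = 1 := by
            have := card_pos.mpr ⟨c, hcG2⟩; omega
          obtain ⟨z, hz⟩ := card_eq_one.mp h1
          have hno : ∀ y ∈ R, ¬ StrictBtw b y c := by
            intro y hyR hy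
            obtain ⟨hp1, hp2⟩ := mop_base2 hbc2 hy
            have hyG : y ∈ G2 := mem_filter.mpr ⟨hyR, ⟨hp1, hp2⟩⟩
            have hcz : c = z := by
              have := hcG2; rw [hz, mem_singleton] at this; exact this
            rw [hz, mem_singleton, ← hcz] at hyG
            rw [hyG] at hy
            exact lt_irrefl _ hy.2
          rcases hRp b hbR c hcR hbc hno with h | h
          · exact pairT b hbT c hcT h
          · exact h
      have alt3 : 2 ≤ G3.card ∨ ((c, a) ∈ F ∨ (a, c) ∈ F) := by
        by_cases h2 : 2 ≤ G3.card
        · exact Or.inl h2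
        · right
          have h1 : G3.card = 1 := by
            have := card_pos.mpr ⟨a, haG3⟩; omega
          obtain ⟨z, hz⟩ := card_eq_one.mp h1
          have hno : ∀ y ∈ R, ¬ StrictBtw c y a := by
            intro y hyR hy
            have hp1 := mop_base3 hγpos hy
            have hyG : y ∈ G3 := mem_filter.mpr ⟨hyR, ⟨by omega, by omega⟩⟩
            have haz : a = z := by
              have := haG3; rw [hz, mem_singleton] at this; exact this
            rw [hz, mem_singleton, ← haz] at hyG
            rw [hyG] at hy
            exact lt_irrefl _ hy.2
          rcases hRp c hcR a haR (Ne.symm hac) hno with h | h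
          · exact pairT c hcT a haT h
          · exact h
      have getmem : ∀ {p q : Fin n × Fin n}, (p ∈ F ∨ q ∈ F) →
          ∃ e ∈ F, e = p ∨ e = q := by
        rintro p q (h | h)
        · exact ⟨p, h, Or.inl rfl⟩
        · exact ⟨q, h, Or.inr rfl⟩
      have hne12 : ∀ e1 e2 : Fin n × Fin n, (e1 = (a, b) ∨ e1 = (b, a)) →
          (e2 = (b, c) ∨ e2 = (c, b)) → e1 ≠ e2 := by
        rintro _ _ (rfl | rfl) (rfl | rfl) <;> simp [Prod.ext_iff] <;> tauto
      have hne13 : ∀ e1 e3 : Fin n × Fin n, (e1 = (a, b) ∨ e1 = (b, a)) →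
          (e3 = (c, a) ∨ e3 = (a, c)) → e1 ≠ e3 := by
        rintro _ _ (rfl | rfl) (rfl | rfl) <;> simp [Prod.ext_iff] <;> tauto
      have hne23 : ∀ e2 e3 : Fin n × Fin n, (e2 = (b, c) ∨ e2 = (c, b)) →
          (e3 = (c, a) ∨ e3 = (a, c)) → e2 ≠ e3 := by
        rintro _ _ (rfl | rfl) (rfl | rfl) <;> simp [Prod.ext_iff] <;> tauto
      have hthree : ∀ e1 e2 e3 : Fin n × Fin n, e1 ∈ F → e2 ∈ F → e3 ∈ F →
          e1 ≠ e2 → e1 ≠ e3 → e2 ≠ e3 → 3 ≤ F.card := by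
        intro e1 e2 e3 h1 h2 h3 d12 d13 d23
        have hsub : ({e1, e2, e3} : Finset (Fin n × Fin n)) ⊆ F := by
          intro z hz
          simp only [mem_insert, mem_singleton] at hz
          rcases hz with rfl | rfl | rfl <;> assumption
        have hc : ({e1, e2, e3} : Finset (Fin n × Fin n)).card = 3 := by
          rw [card_insert_of_notMem (by simp [d12, d13]),
            card_insert_of_notMem (by simp [d23]), card_singleton]
        calc (3 : ℕ) = ({e1, e2, e3} : Finset (Fin n × Fin n)).card := hc.symm
          _ ≤ F.card := card_le_card hsub
      have hg1 : 1 ≤ G1.card := card_pos.mpr ⟨b, hbG1⟩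
      have hg2 : 1 ≤ G2.card := card_pos.mpr ⟨c, hcG2⟩
      have hg3 : 1 ≤ G3.card := card_pos.mpr ⟨a, haG3⟩
      rcases alt1 with A1 | A1 <;> rcases alt2 with A2 | A2 <;> rcases alt3 with A3 | A3
      · omega
      · obtain ⟨e3, he3F, _⟩ := getmem A3
        have : 1 ≤ F.card := card_pos.mpr ⟨e3, he3F⟩
        omega
      · obtain ⟨e2, he2F, _⟩ := getmem A2
        have : 1 ≤ F.card := card_pos.mpr ⟨e2, he2F⟩
        omega
      · obtain ⟨e2, he2F, he2⟩ := getmem A2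
        obtain ⟨e3, he3F, he3⟩ := getmem A3
        have : 2 ≤ F.card := Finset.one_lt_card.mpr
          ⟨e2, he2F, e3, he3F, hne23 e2 e3 he2 he3⟩
        omega
      · obtain ⟨e1, he1F, _⟩ := getmem A1
        have : 1 ≤ F.card := card_pos.mpr ⟨e1, he1F⟩
        omega
      · obtain ⟨e1, he1F, he1⟩ := getmem A1
        obtain ⟨e3, he3F, he3⟩ := getmem A3
        have : 2 ≤ F.card := Finset.one_lt_card.mpr
          ⟨e1, he1F, e3, he3F, hne13 e1 e3 he1 he3⟩
        omega
      · obtain ⟨e1, he1F, he1⟩ := getmem A1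
        obtain ⟨e2, he2F, he2⟩ := getmem A2
        have : 2 ≤ F.card := Finset.one_lt_card.mpr
          ⟨e1, he1F, e2, he2F, hne12 e1 e2 he1 he2⟩
        omega
      · obtain ⟨e1, he1F, he1⟩ := getmem A1
        obtain ⟨e2, he2F, he2⟩ := getmem A2
        obtain ⟨e3, he3F, he3⟩ := getmem A3
        have := hthree e1 e2 e3 he1F he2F he3F (hne12 e1 e2 he1 he2)
          (hne13 e1 e3 he1 he3) (hne23 e2 e3 he2 he3)
        omega
    · -- split case
      push_neg at hone
      obtain ⟨T', hT'S, hT'T⟩ := hone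
      have hT'3 := hT3 T' hT'S
      have hnsub : ¬ T' ⊆ T := fun hsub =>
        hT'T (Finset.eq_of_subset_of_card_le hsub (by rw [hT'3, hT3 T hTS]))
      obtain ⟨x, hxT', hxT⟩ := Finset.not_subset.mp hnsub
      have hxa : x ≠ a := fun h => hxT (h ▸ haT)
      have hxb : x ≠ b := fun h => hxT (h ▸ hbT)
      have hxc : x ≠ c := fun h => hxT (h ▸ hcT)
      have hpx0 : 0 < (x - a).val := mop_sub_val_pos hxa
      have hpxβ : (x - a).val ≠ (b - a).val := fun h => hxb (mop_sub_val_inj h)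
      have hpxγ : (x - a).val ≠ (c - a).val := fun h => hxc (mop_sub_val_inj h)
      have hGood : MopGood S R F := ⟨hT3, hTR, hTF, hX, hFp, hRp⟩
      rcases lt_trichotomy ((x - a).val) ((b - a).val) with h | h | h
      · exact mop_split S R F hGood ih T T' hTS hT'S a b c x haT hbT hcT hxT'
          ⟨hpx0, h⟩ (mop_rot1 hβpos hbc2)
      · exact absurd h hpxβ
      · rcases lt_trichotomy ((x - a).val) ((c - a).val) with h' | h' | h'
        · exact mop_split S R F hGood ih T T' hTS hT'S b c a x hbT hcT haT hxT'
            (mop_rot2 h h') (mop_rot3 hβpos hbc2)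
        · exact absurd h' hpxγ
        · exact mop_split S R F hGood ih T T' hTS hT'S c a b x hcT haT hbT hxT'
            (mop_rot4 hγpos h') ⟨hβpos, hbc2⟩
  have hvne : (b0 - a0).val ≠ (c0 - a0).val := fun h => hbc0 (mop_sub_val_inj h)
  rcases hvne.lt_or_gt with h | h
  · exact main a0 b0 c0 hab0 hac0 hbc0 hTe0 h
  · refine main a0 c0 b0 hac0 hab0 (Ne.symm hbc0) ?_ h
    rw [hTe0]
    exact congrArg (insert a0) (Finset.pair_comm b0 c0)

end Key3


/-- A maximal outerplanar graph of order `n` with `k ≥ 1`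
internal triangles satisfies `k ≤ ⌊n/2⌋ - 2`. -/
theorem stmt_12 (n k : ℕ) [NeZero n] (G : SimpleGraph (Fin n))
    (hG : IsMOPFin n G) (hk : (InternalTriangles n G).ncard = k) (hk1 : 1 ≤ k) :
    k ≤ n / 2 - 2 := by
  classical
  obtain ⟨hn3, hcyc, hnc, hmax⟩ := hG
  have hfin : (InternalTriangles n G).Finite := Set.toFinite _
  have hScard : hfin.toFinset.card = k := by
    rw [← hk, Set.ncard_eq_toFinset_card _ hfin]
  have hmem : ∀ T, T ∈ hfin.toFinset ↔ T ∈ InternalTriangles n G :=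
    fun T => Set.Finite.mem_toFinset hfin
  have hgood : MopGood hfin.toFinset Finset.univ (∅ : Finset (Fin n × Fin n)) := by
    refine ⟨?_, ?_, ?_, ?_, ?_, ?_⟩
    · intro T hT; exact ((hmem T).mp hT).1
    · intro T _ p _; exact Finset.mem_univ p
    · intro T hT p hp q hq hpq
      exact absurd hpq (((hmem T).mp hT).2.2 p hp q hq)
    · intro T hT T' hT' p hp q hq p' hp' q' hq' hpq hpq'
      exact hnc p q p' q' (((hmem T).mp hT).2.1 p hp q hq hpq)
        (((hmem T').mp hT').2.1 p' hp' q' hq' hpq')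
    · intro e he; simp at he
    · intro p _ q _ hpq hno
      exact Or.inl (mop_succ hn3 hpq (hno (p + 1) (Finset.mem_univ _)))
  have hne : hfin.toFinset.Nonempty := by
    rw [← Finset.card_pos, hScard]; omega
  have hkey := mop_key hfin.toFinset Finset.univ ∅ hgood hne
  rw [hScard, Finset.card_univ, Fintype.card_fin, Finset.card_empty] at hkey
  omega
end

section
/- Let G be a maximal outerplanar graph of order n ≥ 6 with Hamiltonian cycle H, let R be a general position set of G with |R| ≥ 5, and let u, v, w be three consecutive vertices on H. Then at most two of u, v, w belong to R. -/
open SimpleGraph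

section StmtFourteenAux

private lemma aux_val_one {n : ℕ} [NeZero n] (hn : 6 ≤ n) : (1 : Fin n).val = 1 := by
  rw [Fin.val_one', Nat.mod_eq_of_lt (by omega)]

open Fin.NatCast in
private lemma aux_val_two {n : ℕ} [NeZero n] (hn : 6 ≤ n) : (2 : Fin n).val = 2 := by
  have h : (2 : Fin n) = ((2 : ℕ) : Fin n) := by norm_cast
  rw [h, Fin.val_cast_of_lt (by omega)]

private lemma aux_val_neg_one {n : ℕ} [NeZero n] (hn : 6 ≤ n) : (-1 : Fin n).val = n - 1 := by
  have h : (-1 : Fin n) = 0 - 1 := (zero_sub 1).symm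
  rw [h, Fin.sub_def]
  show (n - (1 : Fin n).val + (0 : Fin n).val) % n = n - 1
  rw [Fin.val_one', Fin.val_zero, Nat.mod_eq_of_lt (show (1 : ℕ) < n by omega),
    Nat.mod_eq_of_lt (by omega)]
  omega

private lemma aux_val_neg_two {n : ℕ} [NeZero n] (hn : 6 ≤ n) : (-2 : Fin n).val = n - 2 := by
  have h : (-2 : Fin n) = 0 - 2 := (zero_sub 2).symm
  rw [h, Fin.sub_def]
  show (n - (2 : Fin n).val + (0 : Fin n).val) % n = n - 2
  rw [aux_val_two hn, Fin.val_zero, Nat.mod_eq_of_lt (by omega)]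
  omega

open Fin.NatCast Fin.CommRing in
private lemma aux_conn {n : ℕ} [NeZero n] {G : SimpleGraph (Fin n)}
    (hadjH : ∀ i : Fin n, G.Adj i (i + 1)) : G.Connected := by
  rw [SimpleGraph.connected_iff]
  have key : ∀ (i : Fin n) (k : ℕ), G.Reachable i (i + (k : Fin n)) := by
    intro i k
    induction k with
    | zero => simpa using SimpleGraph.Reachable.refl i
    | succ k ih =>
        have h2 : ((((k : ℕ) + 1 : ℕ)) : Fin n) = (k : Fin n) + 1 := by push_cast; ring
        rw [h2, ← add_assoc]
        exact ih.trans (hadjH (i + (k : Fin n))).reachable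
  refine ⟨fun a b => ?_, ⟨0⟩⟩
  have h := key a ((b - a).val)
  rwa [Fin.cast_val_eq_self, show a + (b - a) = b from by ring] at h

end StmtFourteenAux

/-- In a maximal outerplanar graph of order `n ≥ 6`, if `R` is a
general position set with `|R| ≥ 5`, then among any three consecutive vertices
`u, u+1, u+2` of the Hamiltonian cycle at most two belong to `R`. -/
theorem stmt_14 (n : ℕ) [NeZero n] (hn : 6 ≤ n) (G : SimpleGraph (Fin n))
    (hG : IsMOPFin n G) (R : Set (Fin n)) (hR : IsGPSet G R)
    (hcard : 5 ≤ R.ncard) (u : Fin n) :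
    ¬ (u ∈ R ∧ u + 1 ∈ R ∧ u + 2 ∈ R) := by
  obtain ⟨hn3, hadjH, hnoncross, hmax⟩ := hG
  letI := Fin.instCommRing n
  rintro ⟨hu, hv, hw⟩
  have hconn : G.Connected := aux_conn hadjH
  have hne01 : u ≠ u + 1 := by
    intro h
    have h1 : (1 : Fin n) = 0 := left_eq_add.mp h
    have := congrArg Fin.val h1
    rw [aux_val_one hn, Fin.val_zero] at this
    omega
  have hne12 : u + 1 ≠ u + 2 := by
    intro h
    have h1 : (1 : Fin n) = 2 := add_left_cancel h
    have := congrArg Fin.val h1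
    rw [aux_val_one hn, aux_val_two hn] at this
    omega
  have hne02 : u ≠ u + 2 := by
    intro h
    have h1 : (2 : Fin n) = 0 := left_eq_add.mp h
    have := congrArg Fin.val h1
    rw [aux_val_two hn, Fin.val_zero] at this
    omega
  have hd1 : G.dist u (u + 1) = 1 := SimpleGraph.dist_eq_one_iff_adj.mpr (hadjH u)
  have hd2 : G.dist (u + 1) (u + 2) = 1 := by
    have h := hadjH (u + 1)
    rw [show u + 1 + 1 = u + 2 from by ring] at h
    exact SimpleGraph.dist_eq_one_iff_adj.mpr h
  by_cases hadj2 : G.Adj u (u + 2)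
  · -- triangle case: u+1 has only neighbors u and u+2
    have hnbr : ∀ y : Fin n, G.Adj (u + 1) y → y = u ∨ y = u + 2 := by
      intro y hy
      by_contra hcon
      push_neg at hcon
      obtain ⟨hyu, hyw⟩ := hcon
      refine hnoncross u (u + 2) (u + 1) y hadj2 hy ⟨⟨?_, ?_⟩, ?_, ?_⟩
      · show 0 < (u + 1 - u).val
        rw [show u + 1 - u = 1 from by ring, aux_val_one hn]
        omega
      · show (u + 1 - u).val < (u + 2 - u).val
        rw [show u + 1 - u = 1 from by ring, show u + 2 - u = 2 from by ring,
          aux_val_one hn, aux_val_two hn]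
        omega
      · show 0 < (y - (u + 2)).val
        have hz : y - (u + 2) ≠ 0 := sub_ne_zero.mpr hyw
        have hz2 : (y - (u + 2)).val ≠ 0 := fun h => hz (Fin.val_injective (by rw [h, Fin.val_zero]))
        omega
      · show (y - (u + 2)).val < (u - (u + 2)).val
        rw [show u - (u + 2) = -2 from by ring, aux_val_neg_two hn]
        have hlt : (y - (u + 2)).val < n := (y - (u + 2)).isLt
        have hne1 : y - (u + 2) ≠ -1 := by
          intro h
          apply hy.ne'
          rw [sub_eq_iff_eq_add] at h
          rw [h]; ring
        have hne2 : y - (u + 2) ≠ -2 := by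
          intro h
          apply hyu
          rw [sub_eq_iff_eq_add] at h
          rw [h]; ring
        have hv1 : (y - (u + 2)).val ≠ n - 1 := fun h =>
          hne1 (Fin.val_injective (by rw [h, aux_val_neg_one hn]))
        have hv2 : (y - (u + 2)).val ≠ n - 2 := fun h =>
          hne2 (Fin.val_injective (by rw [h, aux_val_neg_two hn]))
        omega
    -- pick a fourth vertex of R
    have hex : ∃ x ∈ R, x ≠ u ∧ x ≠ u + 1 ∧ x ≠ u + 2 := by
      by_contra hcon
      push_neg at hcon
      have hsub : R ⊆ {u, u + 1, u + 2} := by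
        intro y hy
        simp only [Set.mem_insert_iff, Set.mem_singleton_iff]
        by_cases h1 : y = u
        · exact Or.inl h1
        by_cases h2 : y = u + 1
        · exact Or.inr (Or.inl h2)
        exact Or.inr (Or.inr (hcon y hy h1 h2))
      have h1 := Set.ncard_le_ncard hsub (Set.toFinite _)
      have a1 := Set.ncard_insert_le u ({u + 1, u + 2} : Set (Fin n))
      have a2 := Set.ncard_insert_le (u + 1) ({u + 2} : Set (Fin n))
      have a3 : ({u + 2} : Set (Fin n)).ncard = 1 := Set.ncard_singleton _
      omega
    obtain ⟨x, hxR, hxu, hxv, hxw⟩ := hex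
    have t1 : G.dist x (u + 1) ≤ G.dist x u + 1 := by
      have h := hconn.dist_triangle (u := x) (v := u) (w := u + 1)
      rwa [hd1] at h
    have t2 : G.dist x u ≤ G.dist x (u + 1) + 1 := by
      have h := hconn.dist_triangle (u := x) (v := u + 1) (w := u)
      rwa [SimpleGraph.dist_comm (u := u + 1) (v := u), hd1] at h
    have t3 : G.dist x (u + 1) ≤ G.dist x (u + 2) + 1 := by
      have h := hconn.dist_triangle (u := x) (v := u + 2) (w := u + 1)
      rwa [SimpleGraph.dist_comm (u := u + 2) (v := u + 1), hd2] at h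
    have t4 : G.dist x (u + 2) ≤ G.dist x (u + 1) + 1 := by
      have h := hconn.dist_triangle (u := x) (v := u + 1) (w := u + 2)
      rwa [hd2] at h
    have g1 : G.dist x (u + 1) ≠ G.dist x u + 1 := by
      have h := hR hxR hu hv hxu hne01 hxv
      rwa [hd1] at h
    have g2 : G.dist x u ≠ G.dist x (u + 1) + 1 := by
      have h := hR hxR hv hu hxv (Ne.symm hne01) hxu
      rwa [SimpleGraph.dist_comm (u := u + 1) (v := u), hd1] at h
    have g3 : G.dist x (u + 1) ≠ G.dist x (u + 2) + 1 := by
      have h := hR hxR hw hv hxw (Ne.symm hne12) hxv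
      rwa [SimpleGraph.dist_comm (u := u + 2) (v := u + 1), hd2] at h
    have g4 : G.dist x (u + 2) ≠ G.dist x (u + 1) + 1 := by
      have h := hR hxR hv hw hxv hne12 hxw
      rwa [hd2] at h
    have e1 : G.dist x u = G.dist x (u + 1) := by omega
    have e3 : G.dist x (u + 2) = G.dist x (u + 1) := by omega
    have hpos : 0 < G.dist (u + 1) x := hconn.pos_dist_of_ne (Ne.symm hxv)
    obtain ⟨p, hp⟩ := hconn.exists_walk_length_eq_dist (u + 1) x
    cases p with
    | nil => exact absurd rfl hxv
    | cons hadjy q =>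
        rename_i y
        have hlen : q.length + 1 = G.dist (u + 1) x := by
          simpa [SimpleGraph.Walk.length_cons] using hp
        have hyx : G.dist y x ≤ q.length := SimpleGraph.dist_le q
        have hco : G.dist (u + 1) x = G.dist x (u + 1) := SimpleGraph.dist_comm
        rcases hnbr y hadjy with hEq | hEq
        · have hd : G.dist x u = G.dist y x := by rw [hEq, SimpleGraph.dist_comm]
          omega
        · have hd : G.dist x (u + 2) = G.dist y x := by rw [hEq, SimpleGraph.dist_comm]
          omega
  · -- no chord: u+1 lies on a geodesic from u to u+2
    have hle : G.dist u (u + 2) ≤ 2 := by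
      have h := hconn.dist_triangle (u := u) (v := u + 1) (w := u + 2)
      rwa [hd1, hd2] at h
    have hpos : 0 < G.dist u (u + 2) := hconn.pos_dist_of_ne hne02
    have hne1 : G.dist u (u + 2) ≠ 1 := fun h =>
      hadj2 (SimpleGraph.dist_eq_one_iff_adj.mp h)
    have heq : G.dist u (u + 2) = 2 := by omega
    have h := hR hu hv hw hne01 hne12 hne02
    rw [hd1, hd2, heq] at h
    exact h rfl
end

section
/- Let G be a connected graph and S a general position set of G. Then every connected component of the subgraph induced by S is a complete graph. -/
open SimpleGraph

/-- Every connected component of the subgraph induced by a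
general position set of a connected graph is a complete graph. -/
theorem stmt_16 {V : Type*} (G : SimpleGraph V) (hconn : G.Connected)
    (S : Set V) (hS : IsGPSet G S) :
    ∀ u v : S, (G.induce S).Reachable u v → u = v ∨ (G.induce S).Adj u v := by
  intro u v h
  obtain ⟨w⟩ := h
  induction w with
  | nil => exact Or.inl rfl
  | @cons a b c hab p ih =>
    rcases ih with rfl | hbc
    · exact Or.inr hab
    · by_cases hac : a = c
      · exact Or.inl hac
      right
      have hab' : G.Adj ↑a ↑b := hab
      have hbc' : G.Adj ↑b ↑c := hbc
      have hne1 : (a : V) ≠ b := hab'.ne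
      have hne2 : (b : V) ≠ c := hbc'.ne
      have hne3 : (a : V) ≠ c := fun h => hac (Subtype.ext h)
      have hgp := hS a.2 b.2 c.2 hne1 hne2 hne3
      have d1 : G.dist ↑a ↑b = 1 := SimpleGraph.dist_eq_one_iff_adj.mpr hab'
      have d2 : G.dist ↑b ↑c = 1 := SimpleGraph.dist_eq_one_iff_adj.mpr hbc'
      rw [d1, d2] at hgp
      have htri := hconn.dist_triangle (u := (a:V)) (v := b) (w := c)
      rw [d1, d2] at htri
      have hpos := hconn.pos_dist_of_ne hne3
      have : G.dist ↑a ↑c = 1 := by omega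
      exact (SimpleGraph.dist_eq_one_iff_adj (G := G)).mp this
end
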